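/- arXiv:1901.07304 — 3 statements merged into one kernel-verified Lean document; each statement's English description precedes it below -/
import Mathlib

section
/- Let (X,f) be a TDS with the uniform separation property and φ: X → ℝ continuous. For any η > 0 there exist δ* > 0 and ε* > 0 such that for every ergodic μ ∈ E(X,f) and every sufficiently small neighborhood F ⊂ M(X) of μ there exists n*_{F,μ,η} ∈ ℕ such that for every n ≥ n*_{F,μ,η} there exists a (δ*,n,ε*)-separated set Γ_n ⊂ X_{n,F} with Σ_{x∈Γ_n} e^{S_nφ(x)} ≥ exp[n(h_μ(f) + ∫φ dμ − η)]. -/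
open MeasureTheory Filter Set
open scoped ENNReal NNReal

namespace Paper

variable {X : Type*}

/-- Birkhoff sum `S_n φ(x) = ∑_{i<n} φ(f^i x)`. -/
def birk (f : X → X) (φ : X → ℝ) (n : ℕ) (x : X) : ℝ :=
  ∑ i ∈ Finset.range n, φ (f^[i] x)

section Metric

variable [MetricSpace X]

/-- The Bowen ball `B_n(x, ε) = {y : d_n(x,y) < ε}`. -/
def bowenBall (f : X → X) (x : X) (n : ℕ) (ε : ℝ) : Set X :=
  {y | ∀ i < n, dist (f^[i] x) (f^[i] y) < ε}

/-- The number of indices `0 ≤ j ≤ n-1` with `dist (f^j x, f^j y) > ε`. -/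
noncomputable def sepCount (f : X → X) (ε : ℝ) (n : ℕ) (x y : X) : ℕ :=
  Nat.card {j : ℕ // j < n ∧ ε < dist (f^[j] x) (f^[j] y)}

/-- `A` is an `(n,ε)`-separated set. -/
def IsNSep (f : X → X) (n : ℕ) (ε : ℝ) (A : Set X) : Prop :=
  ∀ x ∈ A, ∀ y ∈ A, x ≠ y → ∃ j < n, ε < dist (f^[j] x) (f^[j] y)

/-- `A` is a `(δ,n,ε)`-separated set. -/
def IsDeltaSep (f : X → X) (δ : ℝ) (n : ℕ) (ε : ℝ) (A : Set X) : Prop :=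
  ∀ x ∈ A, ∀ y ∈ A, x ≠ y → δ * n ≤ (sepCount f ε n x y : ℝ)

end Metric

section Entropy

variable [MeasurableSpace X]

/-- A finite measurable partition of `X`. -/
def IsFinPartition (s : Finset (Set X)) : Prop :=
  (∀ A ∈ s, MeasurableSet A) ∧ ⋃₀ (s : Set (Set X)) = Set.univ ∧
    (s : Set (Set X)).Pairwise Disjoint

/-- The entropy `H(μ, ⋁_{i<n} f^{-i} ξ)` of the `n`-th dynamical refinement of the
partition `s` (with the convention `0 · log 0 = 0`). -/
noncomputable def dynH (f : X → X) (μ : Measure X) (s : Finset (Set X)) (n : ℕ) : ℝ :=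
  -∑ w : Fin n → {A // A ∈ s},
      (μ (⋂ i : Fin n, f^[(i : ℕ)] ⁻¹' ((w i : Set X)))).toReal *
        Real.log (μ (⋂ i : Fin n, f^[(i : ℕ)] ⁻¹' ((w i : Set X)))).toReal

/-- The Kolmogorov–Sinai entropy `h_μ(f)`, as an extended real:
`sup_ξ lim_n H(μ, ξ^n)/n`. -/
noncomputable def ksEntropy (f : X → X) (μ : Measure X) : EReal :=
  ⨆ (s : Finset (Set X)) (_ : IsFinPartition s),
    Filter.atTop.liminf (fun n : ℕ => ((dynH f μ s n / n : ℝ) : EReal))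

end Entropy

section Empiric

variable [MeasurableSpace X]

/-- The empiric measure `E_n(x) = (1/n) ∑_{k<n} δ_{f^k x}`. -/
noncomputable def empiric (f : X → X) (x : X) (n : ℕ) : Measure X :=
  (n : ℝ≥0∞)⁻¹ • ∑ k ∈ Finset.range n, Measure.dirac (f^[k] x)

end Empiric

section WeakStar

variable [MeasurableSpace X] [TopologicalSpace X] [OpensMeasurableSpace X]

/-- The set `X_{n,F}` of points whose `n`-th empiric measure lies in `F ⊆ M(X)`
(where `M(X)`, the space of Borel probability measures, carries the weak-star topology). -/
def Xnf (f : X → X) (n : ℕ) (F : Set (ProbabilityMeasure X)) : Set X :=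
  {x | ∃ h : IsProbabilityMeasure (empiric f x n),
        (⟨empiric f x n, h⟩ : ProbabilityMeasure X) ∈ F}

end WeakStar

section UniformSep

variable [MetricSpace X] [MeasurableSpace X] [OpensMeasurableSpace X]

/-- `N(F;δ,n,ε)`: the maximal cardinality of a `(δ,n,ε)`-separated subset of `X_{n,F}`. -/
noncomputable def Nsep (f : X → X) (F : Set (ProbabilityMeasure X))
    (δ : ℝ) (n : ℕ) (ε : ℝ) : ℕ :=
  sSup {k : ℕ | ∃ E : Finset X, ↑E ⊆ Xnf f n F ∧ IsDeltaSep f δ n ε ↑E ∧ E.card = k}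

/-- The uniform separation property: for every `η > 0` there are `δ* > 0`, `ε* > 0`
such that for each ergodic `μ`, each real `h ≤ h_μ(f)` and each neighborhood `F` of `μ`,
eventually `N(F;δ*,n,ε*) ≥ e^{n(h-η)}`. -/
def UniformSeparation (f : X → X) : Prop :=
  ∀ η : ℝ, 0 < η → ∃ δs > (0 : ℝ), ∃ εs > (0 : ℝ),
    ∀ (μ : Measure X) (hp : IsProbabilityMeasure μ), Ergodic f μ →
      ∀ h : ℝ, (h : EReal) ≤ ksEntropy f μ →
        ∀ F ∈ nhds (X := ProbabilityMeasure X) ⟨μ, hp⟩,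
          ∃ nstar : ℕ, ∀ n : ℕ, nstar ≤ n →
            Real.exp ((n : ℝ) * (h - η)) ≤ (Nsep f F δs n εs : ℝ)

/-- The ergodic measures of `(X,f)` are entropy dense. -/
def EntropyDense (f : X → X) : Prop :=
  ∀ (μ : Measure X) (hp : IsProbabilityMeasure μ), MeasurePreserving f μ μ →
    ∀ F ∈ nhds (X := ProbabilityMeasure X) ⟨μ, hp⟩,
      ∀ hstar : ℝ, (hstar : EReal) < ksEntropy f μ →
        ∃ ν : ProbabilityMeasure X, ν ∈ F ∧ Ergodic f ν.toMeasure ∧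
          (hstar : EReal) < ksEntropy f ν.toMeasure

end UniformSep

end Paper

open Paper


open OmegaCompletePartialOrder in
lemma measure_omegaSup_apply {X : Type*} [MeasurableSpace X]
    (ch : Chain (Measure X)) {A : Set X} (hA : MeasurableSet A) :
    ωSup ch A = ⨆ n, ch n A := by
  classical
  have swap : ∀ g : ℕ → ℕ → ℝ≥0∞, (∀ i, Monotone fun n => g n i) →
      (⨆ n, ∑' i, g n i) = ∑' i, ⨆ n, g n i := by
    intro g hg
    have h2 : (∑' i, ⨆ n, g n i) = ∫⁻ i, ⨆ n, g n i ∂(Measure.count) :=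
      (lintegral_count _).symm
    rw [h2, lintegral_iSup (fun n => measurable_of_countable _) (fun a b hab i => hg i hab)]
    simp_rw [lintegral_count]
  set m : Measure X := Measure.ofMeasurable (fun s _ => ⨆ n, ch n s)
    (by simp) (fun f hf hd => by
      simp_rw [measure_iUnion hd hf]
      exact swap (fun n i => ch n (f i)) fun i a b hab => Measure.le_iff'.1 (ch.monotone hab) _)
    with hm
  have hma : ∀ s : Set X, MeasurableSet s → m s = ⨆ n, ch n s := fun s hs => by
    rw [hm]; exact Measure.ofMeasurable_apply s hs
  have hub : ∀ n, ch n ≤ m := fun n => Measure.le_iff.2 fun s hs => by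
    rw [hma s hs]; exact le_iSup (fun n => ch n s) n
  have h1 : ωSup ch ≤ m := ωSup_le _ _ hub
  have h2 : m ≤ ωSup ch := Measure.le_iff.2 fun s hs => by
    rw [hma s hs]; exact iSup_le fun n => Measure.le_iff'.1 (le_ωSup ch n) s
  rw [le_antisymm h1 h2, hma A hA]

open OmegaCompletePartialOrder in
lemma isOpen_measure_gt {X : Type*} [MeasurableSpace X] {A : Set X} (hA : MeasurableSet A)
    (c : ℝ≥0∞) : Scott.IsOpen (Measure X) {ν : Measure X | c < ν A} := by
  have hmono : Monotone fun ν : Measure X => c < ν A := fun ν₁ ν₂ h h1 =>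
    lt_of_lt_of_le h1 (Measure.le_iff'.1 h A)
  rw [Scott.IsOpen, ωScottContinuous_iff_monotone_map_ωSup]
  refine ⟨hmono, fun ch => eq_of_forall_ge_iff fun z => ?_⟩
  rw [ωSup_le_iff]
  simp only [Chain.map_coe, Function.comp_apply, OrderHom.coe_mk, le_Prop_eq, Set.mem_setOf_eq]
  rw [measure_omegaSup_apply ch hA]
  simp only [lt_iSup_iff]
  exact ⟨fun H i hi => H ⟨i, hi⟩, fun H ⟨i, hi⟩ => H i hi⟩

lemma step_bounds {X : Type*} (ψ : X → ℝ) (δ : ℝ) (hδ : 0 < δ) (K : ℕ)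
    (x : X) (h0 : 0 ≤ ψ x) (hK : ψ x ≤ K * δ) :
    ψ x - δ ≤ ∑ k ∈ Finset.Icc 1 K, Set.indicator {y | (k:ℝ) * δ < ψ y} (fun _ => δ) x ∧
    ∑ k ∈ Finset.Icc 1 K, Set.indicator {y | (k:ℝ) * δ < ψ y} (fun _ => δ) x ≤ ψ x := by
  classical
  set N : Finset ℕ := (Finset.Icc 1 K).filter (fun k : ℕ => (k:ℝ) * δ < ψ x) with hN
  have hsum : (∑ k ∈ Finset.Icc 1 K, Set.indicator {y | (k:ℝ) * δ < ψ y} (fun _ => δ) x)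
      = (N.card : ℝ) * δ := by
    have h1 : ∀ k ∈ Finset.Icc 1 K, Set.indicator {y | (k:ℝ) * δ < ψ y} (fun _ => δ) x
        = if (k:ℝ) * δ < ψ x then δ else 0 := fun k _ => Set.indicator_apply _ _ _
    rw [Finset.sum_congr rfl h1, ← Finset.sum_filter, ← hN, Finset.sum_const, nsmul_eq_mul]
  have hupper : (∑ k ∈ Finset.Icc 1 K, Set.indicator {y | (k:ℝ) * δ < ψ y} (fun _ => δ) x) ≤ ψ x := by
    rw [hsum]
    have hsub : N ⊆ Finset.Icc 1 (Nat.floor (ψ x / δ)) := by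
      intro k hk
      simp only [hN, Finset.mem_filter, Finset.mem_Icc] at hk ⊢
      refine ⟨hk.1.1, Nat.le_floor ((le_div_iff₀ hδ).2 hk.2.le)⟩
    have hcard : (N.card : ℝ) ≤ ψ x / δ := by
      have h2 : N.card ≤ Nat.floor (ψ x / δ) := by
        simpa using Finset.card_le_card hsub
      calc (N.card : ℝ) ≤ (Nat.floor (ψ x / δ) : ℝ) := by exact_mod_cast h2
        _ ≤ ψ x / δ := Nat.floor_le (div_nonneg h0 hδ.le)
    calc (N.card : ℝ) * δ ≤ (ψ x / δ) * δ := mul_le_mul_of_nonneg_right hcard hδ.le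
      _ = ψ x := div_mul_cancel₀ _ hδ.ne'
  refine ⟨?_, hupper⟩
  rw [hsum]
  by_cases hle : ψ x ≤ δ
  · have : (0:ℝ) ≤ (N.card : ℝ) * δ := by positivity
    linarith
  push_neg at hle
  set a := ψ x / δ with ha
  have ha1 : 1 < a := (one_lt_div hδ).2 hle
  have hceil1 : 1 ≤ Nat.ceil a := Nat.one_le_ceil_iff.2 (by linarith)
  set j := min K (Nat.ceil a - 1) with hj
  have hsub : Finset.Icc 1 j ⊆ N := by
    intro k hk
    simp only [Finset.mem_Icc] at hk
    simp only [hN, Finset.mem_filter, Finset.mem_Icc]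
    refine ⟨⟨hk.1, le_trans hk.2 (min_le_left _ _)⟩, ?_⟩
    have hk2 : k < Nat.ceil a := by
      have := le_trans hk.2 (min_le_right _ _)
      omega
    have : (k:ℝ) < a := Nat.lt_ceil.1 hk2
    calc (k:ℝ) * δ < a * δ := mul_lt_mul_of_pos_right this hδ
      _ = ψ x := div_mul_cancel₀ _ hδ.ne'
  have hjcard : (j : ℝ) ≤ (N.card : ℝ) := by
    have := Finset.card_le_card hsub
    simp only [Nat.card_Icc] at this
    exact_mod_cast by omega
  have hfin : ψ x - δ ≤ (j : ℝ) * δ := by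
    rcases le_total K (Nat.ceil a - 1) with hc | hc
    · have hjK : j = K := min_eq_left hc
      rw [hjK]; linarith
    · have hjc : j = Nat.ceil a - 1 := min_eq_right hc
      have hcast : ((Nat.ceil a - 1 : ℕ) : ℝ) = (Nat.ceil a : ℝ) - 1 := by
        rw [Nat.cast_sub hceil1]; norm_num
      have hca : a ≤ (Nat.ceil a : ℝ) := Nat.le_ceil a
      have : a * δ = ψ x := div_mul_cancel₀ _ hδ.ne'
      rw [hjc, hcast]
      nlinarith
  calc ψ x - δ ≤ (j:ℝ) * δ := hfin
    _ ≤ (N.card : ℝ) * δ := mul_le_mul_of_nonneg_right hjcard hδ.le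

lemma integral_step_bounds {X : Type*} [MetricSpace X] [CompactSpace X] [MeasurableSpace X]
    [BorelSpace X] (ψ : X → ℝ) (hψ : Continuous ψ) (δ : ℝ) (hδ : 0 < δ) (K : ℕ)
    (ν : Measure X) (hν : IsProbabilityMeasure ν)
    (h0 : ∀ x, 0 ≤ ψ x) (hK : ∀ x, ψ x ≤ K * δ) :
    δ * ∑ k ∈ Finset.Icc 1 K, (ν {y | (k:ℝ) * δ < ψ y}).toReal ≤ ∫ x, ψ x ∂ν ∧
      ∫ x, ψ x ∂ν ≤ δ * ∑ k ∈ Finset.Icc 1 K, (ν {y | (k:ℝ) * δ < ψ y}).toReal + δ := by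
  haveI := hν
  have hmeas : ∀ k : ℕ, MeasurableSet {y | (k:ℝ) * δ < ψ y} := fun k =>
    (isOpen_lt continuous_const hψ).measurableSet
  set s : X → ℝ :=
    fun x => ∑ k ∈ Finset.Icc 1 K, Set.indicator {y | (k:ℝ) * δ < ψ y} (fun _ => δ) x with hs
  have hsint : Integrable s ν := integrable_finset_sum _ fun k _ =>
    (integrable_const δ).indicator (hmeas k)
  have hψint : Integrable ψ ν := (BoundedContinuousFunction.mkOfCompact ⟨ψ, hψ⟩).integrable ν
  have hsI : ∫ x, s x ∂ν = δ * ∑ k ∈ Finset.Icc 1 K, (ν {y | (k:ℝ) * δ < ψ y}).toReal := by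
    rw [hs, integral_finset_sum _ fun k _ => (integrable_const δ).indicator (hmeas k),
      Finset.mul_sum]
    refine Finset.sum_congr rfl fun k _ => ?_
    rw [integral_indicator_const _ (hmeas k), smul_eq_mul, mul_comm]
    rfl
  constructor
  · rw [← hsI]
    exact integral_mono hsint hψint fun x => (step_bounds ψ δ hδ K x (h0 x) (hK x)).2
  · have h1 : ∫ x, ψ x ∂ν ≤ ∫ x, (s x + δ) ∂ν := by
      refine integral_mono hψint (hsint.add (integrable_const δ)) fun x => ?_
      have hx : ψ x - δ ≤ s x := (step_bounds ψ δ hδ K x (h0 x) (hK x)).1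
      linarith
    rwa [integral_add hsint (integrable_const δ), integral_const, probReal_univ,
      one_smul, hsI] at h1

lemma key_nhds {X : Type*} [MetricSpace X] [CompactSpace X] [MeasurableSpace X] [BorelSpace X]
    (φ : X → ℝ) (hφ : Continuous φ) (μ : Measure X) (hp : IsProbabilityMeasure μ)
    (θ : ℝ) (hθ : 0 < θ) :
    ∃ F₀ ∈ nhds (X := ProbabilityMeasure X) ⟨μ, hp⟩,
      ∀ (ν : Measure X) (hν : IsProbabilityMeasure ν),
        (⟨ν, hν⟩ : ProbabilityMeasure X) ∈ F₀ → |(∫ x, φ x ∂ν) - ∫ x, φ x ∂μ| < θ := by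
  classical
  have hc := ProbabilityMeasure.continuous_integral_boundedContinuousFunction
    (BoundedContinuousFunction.mkOfCompact ⟨φ, hφ⟩ : BoundedContinuousFunction X ℝ)
  simp only [BoundedContinuousFunction.mkOfCompact_apply, ContinuousMap.coe_mk] at hc
  refine ⟨(fun ν : ProbabilityMeasure X => ∫ x, φ x ∂(ν : Measure X)) ⁻¹'
    Metric.ball (∫ x, φ x ∂μ) θ, ?_, ?_⟩
  · exact hc.continuousAt.preimage_mem_nhds (Metric.ball_mem_nhds _ hθ)
  · intro ν hν hmem
    have h2 : dist (∫ x, φ x ∂ν) (∫ x, φ x ∂μ) < θ := hmem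
    rwa [Real.dist_eq] at h2

lemma integral_empiric_aux {X : Type*} [MetricSpace X] [CompactSpace X] [MeasurableSpace X]
    [BorelSpace X]
    (f : X → X) (φ : X → ℝ) (hφ : Continuous φ) (x : X) (n : ℕ) :
    ∫ y, φ y ∂(empiric f x n) = birk f φ n x / n := by
  rw [empiric, integral_smul_measure, integral_finset_sum_measure]
  · simp only [integral_dirac]
    rw [ENNReal.toReal_inv]
    simp [birk, div_eq_inv_mul]
  · intro i _
    exact (BoundedContinuousFunction.mkOfCompact ⟨φ, hφ⟩).integrable _

/-- Proposition 3.4 -/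
theorem separated_set_of_uniform_separation {X : Type*} [MetricSpace X] [CompactSpace X] [MeasurableSpace X] [BorelSpace X]
    (f : X → X) (hf : Continuous f) (hus : UniformSeparation f)
    (φ : X → ℝ) (hφ : Continuous φ) (η : ℝ) (hη : 0 < η) :
    ∃ δs > (0 : ℝ), ∃ εs > (0 : ℝ),
      ∀ (μ : Measure X) (hp : IsProbabilityMeasure μ), Ergodic f μ →
        ∀ h : ℝ, (h : EReal) ≤ ksEntropy f μ →
          ∃ F₀ ∈ nhds (X := MeasureTheory.ProbabilityMeasure X) ⟨μ, hp⟩,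
            ∀ F ∈ nhds (X := MeasureTheory.ProbabilityMeasure X) ⟨μ, hp⟩, F ⊆ F₀ →
              ∃ nstar : ℕ, ∀ n : ℕ, nstar ≤ n →
                ∃ Γ : Finset X, ↑Γ ⊆ Xnf f n F ∧ IsDeltaSep f δs n εs ↑Γ ∧
                  Real.exp ((n : ℝ) * (h + ∫ x, φ x ∂μ - η)) ≤
                    ∑ x ∈ Γ, Real.exp (birk f φ n x) := by
  obtain ⟨δs, hδ, εs, hε, hmain⟩ := hus (η/2) (by linarith)
  refine ⟨δs, hδ, εs, hε, ?_⟩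
  intro μ hp herg h hle
  set I := ∫ x, φ x ∂μ with hI
  obtain ⟨F₀, hF₀, hF₀prop⟩ := key_nhds φ hφ μ hp (η/2) (by linarith)
  refine ⟨F₀, hF₀, ?_⟩
  intro F hF hFsub
  obtain ⟨nstar, hns⟩ := hmain μ hp herg h hle F hF
  refine ⟨max nstar 1, ?_⟩
  intro n hn
  have hn1 : 1 ≤ n := le_trans (le_max_right _ _) hn
  have hnpos : (0:ℝ) < n := by exact_mod_cast hn1
  have hexp : Real.exp ((n:ℝ) * (h - η/2)) ≤ (Nsep f F δs n εs : ℝ) :=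
    hns n (le_trans (le_max_left _ _) hn)
  have hΓ : ∃ Γ : Finset X, ↑Γ ⊆ Xnf f n F ∧ IsDeltaSep f δs n εs ↑Γ ∧
      Real.exp ((n:ℝ) * (h - η/2)) ≤ (Γ.card : ℝ) := by
    set S := {k : ℕ | ∃ E : Finset X, ↑E ⊆ Xnf f n F ∧ IsDeltaSep f δs n εs ↑E ∧ E.card = k}
      with hS
    by_cases hbdd : BddAbove S
    · have hne : S.Nonempty := ⟨0, ∅, by simp, by intro x hx; simp at hx, rfl⟩
      obtain ⟨E, hE1, hE2, hE3⟩ := Nat.sSup_mem hne hbdd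
      refine ⟨E, hE1, hE2, ?_⟩
      rw [hE3]
      exact hexp
    · obtain ⟨k, hk, hklt⟩ := (not_bddAbove_iff.mp hbdd) ⌈Real.exp ((n:ℝ) * (h - η/2))⌉₊
      obtain ⟨E, hE1, hE2, hE3⟩ := hk
      refine ⟨E, hE1, hE2, ?_⟩
      rw [hE3]
      calc Real.exp ((n:ℝ) * (h - η/2)) ≤ (⌈Real.exp ((n:ℝ) * (h - η/2))⌉₊ : ℝ) :=
            Nat.le_ceil _
        _ ≤ (k : ℝ) := by exact_mod_cast hklt.le
  obtain ⟨Γ, hΓF, hΓsep, hΓcard⟩ := hΓ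
  refine ⟨Γ, hΓF, hΓsep, ?_⟩
  have hbirk : ∀ x ∈ Γ, (n:ℝ) * (I - η/2) ≤ birk f φ n x := by
    intro x hx
    obtain ⟨hpm, hmem⟩ := hΓF hx
    have h0 : |(∫ y, φ y ∂(empiric f x n)) - I| < η/2 :=
      hF₀prop (empiric f x n) hpm (hFsub hmem)
    rw [integral_empiric_aux f φ hφ x n] at h0
    have h1 : I - η/2 < birk f φ n x / n := by
      have := abs_lt.mp h0
      linarith [this.1]
    calc (n:ℝ) * (I - η/2) ≤ (n:ℝ) * (birk f φ n x / n) :=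
          mul_le_mul_of_nonneg_left h1.le hnpos.le
      _ = birk f φ n x := by field_simp
  have hsum : (Γ.card : ℝ) * Real.exp ((n:ℝ) * (I - η/2)) ≤
      ∑ x ∈ Γ, Real.exp (birk f φ n x) := by
    have := Finset.card_nsmul_le_sum Γ (fun x => Real.exp (birk f φ n x))
      (Real.exp ((n:ℝ) * (I - η/2))) (fun x hx => Real.exp_le_exp.mpr (hbirk x hx))
    simpa [nsmul_eq_mul] using this
  calc Real.exp ((n:ℝ) * (h + I - η))
      = Real.exp ((n:ℝ) * (h - η/2)) * Real.exp ((n:ℝ) * (I - η/2)) := by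
        rw [← Real.exp_add]; ring_nf
    _ ≤ (Γ.card : ℝ) * Real.exp ((n:ℝ) * (I - η/2)) :=
        mul_le_mul_of_nonneg_right hΓcard (Real.exp_pos _).le
    _ ≤ ∑ x ∈ Γ, Real.exp (birk f φ n x) := hsum
end

section
/- Let (X,f) be a TDS having the uniform separation property and whose ergodic measures are entropy dense, and let φ: X → ℝ be continuous. For any η > 0 there exist δ* > 0 and ε* > 0 such that for every invariant μ ∈ M(X,f) and every sufficiently small neighborhood F ⊂ M(X) of μ there exists n*_{F,μ,η} ∈ ℕ such that for every n ≥ n*_{F,μ,η} there exists a (δ*,n,ε*)-separated set Γ_n ⊂ X_{n,F} with Σ_{x∈Γ_n} e^{S_nφ(x)} ≥ exp[n(h_μ(f) + ∫φ dμ − η)]. -/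
open MeasureTheory Filter Set
open scoped ENNReal NNReal

open Paper

section Aux

open Paper MeasureTheory OmegaCompletePartialOrder

variable {α : Type*}

lemma aux_tsum_iSup_of_monotone {ι : Type*} {f : ℕ → ι → ℝ≥0∞}
    (hf : ∀ i, Monotone fun n => f n i) :
    ∑' i, ⨆ n, f n i = ⨆ n, ∑' i, f n i := by
  calc ∑' i, ⨆ n, f n i = ⨆ s : Finset ι, ∑ i ∈ s, ⨆ n, f n i := ENNReal.tsum_eq_iSup_sum
    _ = ⨆ s : Finset ι, ⨆ n, ∑ i ∈ s, f n i :=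
        iSup_congr fun s => ENNReal.finsetSum_iSup_of_monotone fun i => hf i
    _ = ⨆ n, ⨆ s : Finset ι, ∑ i ∈ s, f n i := iSup_comm
    _ = ⨆ n, ∑' i, f n i := by simp_rw [← ENNReal.tsum_eq_iSup_sum]

lemma aux_measure_iSup_apply [MeasurableSpace α] {μ : ℕ → Measure α} (hμ : Monotone μ)
    {B : Set α} (hB : MeasurableSet B) : (⨆ n, μ n) B = ⨆ n, μ n B := by
  have hadd : ∀ ⦃g : ℕ → Set α⦄, (∀ i, MeasurableSet (g i)) → Pairwise (Function.onFun Disjoint g) →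
      (⨆ n, μ n (⋃ i, g i)) = ∑' i, ⨆ n, μ n (g i) := by
    intro g hg hd
    rw [aux_tsum_iSup_of_monotone (f := fun n i => μ n (g i)) fun i a b hab => hμ hab _]
    exact iSup_congr fun n => measure_iUnion hd hg
  set T : Measure α := Measure.ofMeasurable (fun B _ => ⨆ n, μ n B)
    (by simp) (fun g hg hd => hadd hg hd) with hTdef
  have hTapp : ∀ {B : Set α}, MeasurableSet B → T B = ⨆ n, μ n B := fun hB =>
    Measure.ofMeasurable_apply _ hB
  have h1 : (⨆ n, μ n) ≤ T := iSup_le fun n => Measure.le_iff.2 fun s hs => by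
    rw [hTapp hs]; exact le_iSup (fun n => μ n s) n
  have h2 : T ≤ ⨆ n, μ n := Measure.le_iff.2 fun s hs => by
    rw [hTapp hs]; exact iSup_le fun n => Measure.le_iff'.1 (le_iSup μ n) s
  rw [le_antisymm h1 h2, hTapp hB]

lemma aux_lintegral_iSup_measure [MeasurableSpace α] {μ : ℕ → Measure α} (hμ : Monotone μ)
    (g : α → ℝ≥0∞) : ∫⁻ x, g x ∂(⨆ n, μ n) = ⨆ n, ∫⁻ x, g x ∂(μ n) := by
  apply le_antisymm
  · rw [MeasureTheory.lintegral]
    refine iSup₂_le fun s hs => ?_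
    have hs' : s.lintegral (⨆ n, μ n) = ⨆ n, s.lintegral (μ n) := by
      calc s.lintegral (⨆ n, μ n) = ∑ x ∈ s.range, x * ⨆ n, μ n (s ⁻¹' {x}) := by
            rw [SimpleFunc.lintegral]
            exact Finset.sum_congr rfl fun x _ => by
              rw [aux_measure_iSup_apply hμ (s.measurableSet_fiber x)]
        _ = ∑ x ∈ s.range, ⨆ n, x * μ n (s ⁻¹' {x}) := by simp_rw [ENNReal.mul_iSup]
        _ = ⨆ n, ∑ x ∈ s.range, x * μ n (s ⁻¹' {x}) :=
            ENNReal.finsetSum_iSup_of_monotone fun x a b hab => mul_le_mul_right (hμ hab _) x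
        _ = ⨆ n, s.lintegral (μ n) := by simp_rw [SimpleFunc.lintegral]
    rw [hs']
    exact iSup_mono fun n =>
      le_trans (le_of_eq (s.lintegral_eq_lintegral (μ n)).symm) (lintegral_mono hs)
  · exact iSup_le fun n => lintegral_mono' (le_iSup μ n) le_rfl

lemma aux_ωSup_Prop_iff (d : Chain Prop) : ωSup d ↔ ∃ i, d i :=
  ⟨fun h => (ωSup_le d (∃ i, d i) fun i hi => ⟨i, hi⟩) h, fun ⟨i, hi⟩ => (le_ωSup d i) hi⟩

lemma aux_integral_control {X : Type*} [MetricSpace X] [CompactSpace X] [MeasurableSpace X]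
    [BorelSpace X] (φ : X → ℝ) (hφ : Continuous φ) (μ : Measure X)
    (hp : IsProbabilityMeasure μ) (ε : ℝ) (hε : 0 < ε) :
    ∃ U : Set (ProbabilityMeasure X), U ∈ nhds (X := ProbabilityMeasure X) ⟨μ, hp⟩ ∧
      ∀ ν : ProbabilityMeasure X, ν ∈ U →
        |(∫ x, φ x ∂(ν : Measure X)) - ∫ x, φ x ∂μ| < ε := by
  have hc := ProbabilityMeasure.continuous_integral_continuousMap (X := X) (⟨φ, hφ⟩ : C(X, ℝ))
  refine ⟨_, hc.continuousAt.preimage_mem_nhds (Metric.ball_mem_nhds _ hε), fun ν hν => ?_⟩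
  simpa [Real.dist_eq] using hν

lemma Paper.integral_empiric {X : Type*} [MetricSpace X] [CompactSpace X] [MeasurableSpace X]
    [BorelSpace X] (f : X → X) (φ : X → ℝ) (hφ : Continuous φ) (x : X) (n : ℕ) :
    ∫ y, φ y ∂(empiric f x n) = (n : ℝ)⁻¹ * birk f φ n x := by
  have hint : ∀ k ∈ Finset.range n, Integrable φ (MeasureTheory.Measure.dirac (f^[k] x)) :=
    fun k _ => (BoundedContinuousFunction.mkOfCompact ⟨φ, hφ⟩).integrable _
  rw [empiric, integral_smul_measure, integral_finset_sum_measure hint]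
  simp [birk, integral_dirac, ENNReal.toReal_inv, smul_eq_mul]

lemma Paper.Xnf_mono {X : Type*} [MeasurableSpace X] [TopologicalSpace X]
    [OpensMeasurableSpace X] (f : X → X) (n : ℕ) {F F' : Set (ProbabilityMeasure X)}
    (hFF : F ⊆ F') : Xnf f n F ⊆ Xnf f n F' := by
  rintro x ⟨hpx, hx⟩
  exact ⟨hpx, hFF hx⟩

lemma Paper.exists_finset_of_nsep {X : Type*} [MetricSpace X] [MeasurableSpace X]
    [OpensMeasurableSpace X] (f : X → X) (F : Set (ProbabilityMeasure X)) (δ : ℝ) (n : ℕ)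
    (ε : ℝ) (c : ℝ) (hc : Real.exp c ≤ (Nsep f F δ n ε : ℝ)) :
    ∃ E : Finset X, ↑E ⊆ Xnf f n F ∧ IsDeltaSep f δ n ε ↑E ∧ Real.exp c ≤ (E.card : ℝ) := by
  have h0 : 0 ∈ {k : ℕ | ∃ E : Finset X, ↑E ⊆ Xnf f n F ∧ IsDeltaSep f δ n ε ↑E ∧ E.card = k} :=
    ⟨∅, by simp, by intro x hx; simp at hx, rfl⟩
  by_cases hbdd :
    BddAbove {k : ℕ | ∃ E : Finset X, ↑E ⊆ Xnf f n F ∧ IsDeltaSep f δ n ε ↑E ∧ E.card = k}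
  · have hmem := Nat.sSup_mem ⟨0, h0⟩ hbdd
    obtain ⟨E, h1, h2, h3⟩ := hmem
    exact ⟨E, h1, h2, by rw [h3]; exact hc⟩
  · obtain ⟨k, hk, hk2⟩ := not_bddAbove_iff.1 hbdd ⌈Real.exp c⌉₊
    obtain ⟨E, h1, h2, h3⟩ := hk
    refine ⟨E, h1, h2, ?_⟩
    have h4 : Real.exp c ≤ (⌈Real.exp c⌉₊ : ℝ) := Nat.le_ceil _
    have h5 : (⌈Real.exp c⌉₊ : ℝ) ≤ (k : ℝ) := by exact_mod_cast hk2.le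
    rw [h3]
    linarith

end Aux

/-- Corollary 3.5: if `(X,f)` has the uniform separation property and the ergodic
measures are entropy dense, then for any `η > 0` there are `δ* > 0`, `ε* > 0` such that
for every invariant `μ` and every sufficiently small weak-star neighborhood `F` of `μ`
there is `n*` such that for all `n ≥ n*` there is a `(δ*,n,ε*)`-separated set
`Γ_n ⊆ X_{n,F}` with `∑_{x∈Γ_n} e^{S_nφ(x)} ≥ exp (n (h_μ(f) + ∫φ dμ - η))`
(stated for every real `h ≤ h_μ(f)`). -/
theorem separated_set_of_invariant {X : Type*} [MetricSpace X] [CompactSpace X] [MeasurableSpace X] [BorelSpace X]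
    (f : X → X) (hf : Continuous f) (hus : UniformSeparation f) (hed : EntropyDense f)
    (φ : X → ℝ) (hφ : Continuous φ) (η : ℝ) (hη : 0 < η) :
    ∃ δs > (0 : ℝ), ∃ εs > (0 : ℝ),
      ∀ (μ : Measure X) (hp : IsProbabilityMeasure μ), MeasurePreserving f μ μ →
        ∀ h : ℝ, (h : EReal) ≤ ksEntropy f μ →
          ∃ F₀ ∈ nhds (X := MeasureTheory.ProbabilityMeasure X) ⟨μ, hp⟩,
            ∀ F ∈ nhds (X := MeasureTheory.ProbabilityMeasure X) ⟨μ, hp⟩, F ⊆ F₀ →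
              ∃ nstar : ℕ, ∀ n : ℕ, nstar ≤ n →
                ∃ Γ : Finset X, ↑Γ ⊆ Xnf f n F ∧ IsDeltaSep f δs n εs ↑Γ ∧
                  Real.exp ((n : ℝ) * (h + ∫ x, φ x ∂μ - η)) ≤
                    ∑ x ∈ Γ, Real.exp (birk f φ n x) := by
  obtain ⟨δs, hδs, εs, hεs, husep⟩ := hus (η/3) (by linarith)
  refine ⟨δs, hδs, εs, hεs, ?_⟩
  intro μ hp hmp h hle
  obtain ⟨U, hU, hUint⟩ := aux_integral_control φ hφ μ hp (η/3) (by linarith)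
  refine ⟨U, hU, ?_⟩
  intro F hF hFsub
  have hintF := interior_mem_nhds.2 hF
  have hlt : ((h - η/3 : ℝ) : EReal) < ksEntropy f μ :=
    lt_of_lt_of_le (by exact_mod_cast (by linarith : h - η/3 < h)) hle
  obtain ⟨ν, hνF, hνerg, hνent⟩ := hed μ hp hmp _ hintF (h - η/3) hlt
  have hνnhds := IsOpen.mem_nhds isOpen_interior hνF
  obtain ⟨nstar, hn⟩ := husep ν.toMeasure ν.2 hνerg (h - η/3) hνent.le _ hνnhds
  refine ⟨max nstar 1, ?_⟩
  intro n hn'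
  have h1n : 1 ≤ n := le_trans (le_max_right _ _) hn'
  have hNs := hn n (le_trans (le_max_left _ _) hn')
  obtain ⟨Γ, hΓsub, hΓsep, hΓcard⟩ :=
    Paper.exists_finset_of_nsep f _ δs n εs _ hNs
  have hΓF : (↑Γ : Set X) ⊆ Xnf f n F :=
    subset_trans hΓsub (Paper.Xnf_mono f n interior_subset)
  refine ⟨Γ, hΓF, hΓsep, ?_⟩
  have hnpos : (0 : ℝ) < n := by exact_mod_cast h1n
  have hbirk : ∀ x ∈ Γ, Real.exp ((n : ℝ) * ((∫ x, φ x ∂μ) - η/3)) ≤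
      Real.exp (birk f φ n x) := by
    intro x hx
    apply Real.exp_le_exp.2
    obtain ⟨hpx, hxmem⟩ := hΓF hx
    have hxU := hFsub hxmem
    have hball : |(∫ y, φ y ∂(empiric f x n)) - ∫ x, φ x ∂μ| < η/3 :=
      hUint _ hxU
    have hie : ∫ y, φ y ∂(empiric f x n) = (n : ℝ)⁻¹ * birk f φ n x :=
      Paper.integral_empiric f φ hφ x n
    rw [hie] at hball
    have habs := abs_lt.1 hball
    have h2 : (∫ x, φ x ∂μ) - η/3 < (n : ℝ)⁻¹ * birk f φ n x := by linarith [habs.1]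
    calc (n : ℝ) * ((∫ x, φ x ∂μ) - η/3) ≤ (n : ℝ) * ((n : ℝ)⁻¹ * birk f φ n x) :=
          mul_le_mul_of_nonneg_left h2.le hnpos.le
      _ = birk f φ n x := by field_simp
  have hsum : (Γ.card : ℝ) * Real.exp ((n : ℝ) * ((∫ x, φ x ∂μ) - η/3)) ≤
      ∑ x ∈ Γ, Real.exp (birk f φ n x) := by
    have := Finset.card_nsmul_le_sum Γ (fun x => Real.exp (birk f φ n x))
      (Real.exp ((n : ℝ) * ((∫ x, φ x ∂μ) - η/3))) hbirk
    simpa [nsmul_eq_mul] using this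
  calc Real.exp ((n : ℝ) * (h + (∫ x, φ x ∂μ) - η))
      = Real.exp ((n : ℝ) * (h - η/3 - η/3)) *
        Real.exp ((n : ℝ) * ((∫ x, φ x ∂μ) - η/3)) := by
        rw [← Real.exp_add]; ring_nf
    _ ≤ (Γ.card : ℝ) * Real.exp ((n : ℝ) * ((∫ x, φ x ∂μ) - η/3)) :=
        mul_le_mul_of_nonneg_right hΓcard (Real.exp_pos _).le
    _ ≤ ∑ x ∈ Γ, Real.exp (birk f φ n x) := hsum
end

section
/- Let (X,f) be a TDS, φ: X → ℝ continuous, and μ ∈ M(X,f). Then P_μ(f,φ) = ess sup{P_μ(f,φ,x) : x ∈ X}, where the essential supremum is taken with respect to μ. -/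
open MeasureTheory Filter Set
open scoped ENNReal NNReal

namespace Paper

variable {X : Type*}

section Pressure

variable [MetricSpace X] [MeasurableSpace X]

/-- Brin–Katok local entropy `h_μ(x) = lim_{ε→0} liminf_n -(1/n) log μ(B_n(x,ε))`
(the limit in `ε` being a supremum by monotonicity). -/
noncomputable def localEntropy (f : X → X) (μ : Measure X) (x : X) : EReal :=
  ⨆ (ε : ℝ) (_ : 0 < ε),
    Filter.atTop.liminf (fun n : ℕ =>
      (((n : ℝ)⁻¹ : ℝ) : EReal) * (-(μ (bowenBall f x n ε)).log))

/-- The point-wise measure theoretic pressure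
`P_μ(f,φ,x) = lim_{ε→0} liminf_n (1/n)[-log μ(B_n(x,ε)) + S_nφ(x)]`. -/
noncomputable def ptPressure (f : X → X) (φ : X → ℝ) (μ : Measure X) (x : X) : EReal :=
  ⨆ (ε : ℝ) (_ : 0 < ε),
    Filter.atTop.liminf (fun n : ℕ =>
      (((n : ℝ)⁻¹ : ℝ) : EReal) * (-(μ (bowenBall f x n ε)).log + ((birk f φ n x : ℝ) : EReal)))

/-- `M(Z,φ,α,N,ε)`: infimum of `∑_i exp(-α n_i + S_{n_i}φ(x_i))` over countable covers
of `Z` by Bowen balls `B_{n_i}(x_i,ε)` with `n_i ≥ N`. -/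
noncomputable def Mcov (f : X → X) (φ : X → ℝ) (Z : Set X) (α : ℝ) (N : ℕ) (ε : ℝ) : ℝ≥0∞ :=
  ⨅ (c : ℕ → X × ℕ)
    (_ : (∀ i, N ≤ (c i).2) ∧ Z ⊆ ⋃ i, bowenBall f (c i).1 (c i).2 ε),
      ∑' i, ENNReal.ofReal (Real.exp (-α * ((c i).2 : ℝ) + birk f φ (c i).2 (c i).1))

/-- `m(Z,φ,α,ε) = lim_{N→∞} M(Z,φ,α,N,ε)` (a supremum, by monotonicity in `N`). -/
noncomputable def mZ (f : X → X) (φ : X → ℝ) (Z : Set X) (α : ℝ) (ε : ℝ) : ℝ≥0∞ :=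
  ⨆ N : ℕ, Mcov f φ Z α N ε

/-- `P_Z(f,φ,ε) = inf {α : m(Z,φ,α,ε) = 0}`, the jump-up point of `α ↦ m(Z,φ,α,ε)`. -/
noncomputable def PZeps (f : X → X) (φ : X → ℝ) (Z : Set X) (ε : ℝ) : EReal :=
  ⨅ (α : ℝ) (_ : mZ f φ Z α ε = 0), ((α : ℝ) : EReal)

/-- The topological pressure `P_Z(f,φ) = lim_{ε→0} P_Z(f,φ,ε)` on an arbitrary set `Z`
(the limit in `ε` being a supremum by monotonicity). -/
noncomputable def PZ (f : X → X) (φ : X → ℝ) (Z : Set X) : EReal :=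
  ⨆ (ε : ℝ) (_ : 0 < ε), PZeps f φ Z ε

/-- The measure theoretic pressure
`P_μ(f,φ) = lim_{ε→0} inf {P_Z(f,φ,ε) : Z Borel, μ(Z) = 1}`. -/
noncomputable def Pmu (f : X → X) (φ : X → ℝ) (μ : Measure X) : EReal :=
  ⨆ (ε : ℝ) (_ : 0 < ε),
    ⨅ (Z : Set X) (_ : MeasurableSet Z ∧ μ Z = 1), PZeps f φ Z ε

end Pressure

end Paper

namespace Paper

section Aux
variable [MetricSpace X]

lemma self_mem_bowenBall {f : X → X} {x : X} {n : ℕ} {ε : ℝ} (hε : 0 < ε) :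
    x ∈ bowenBall f x n ε := fun _ _ => by simp [hε]

lemma bowenBall_mono {f : X → X} {x : X} {n : ℕ} {ε ε' : ℝ} (h : ε ≤ ε') :
    bowenBall f x n ε ⊆ bowenBall f x n ε' := fun y hy i hi => lt_of_lt_of_le (hy i hi) h

lemma isOpen_bowenBall {f : X → X} (hf : Continuous f) {x : X} {n : ℕ} {ε : ℝ} :
    IsOpen (bowenBall f x n ε) := by
  have h : bowenBall f x n ε = ⋂ i ∈ Finset.range n, {y | dist (f^[i] x) (f^[i] y) < ε} := by
    ext y; simp [bowenBall]
  rw [h]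
  refine isOpen_biInter_finset (fun i _ => ?_)
  have : Continuous fun y => dist (f^[i] x) (f^[i] y) :=
    continuous_const.dist (hf.iterate i)
  exact isOpen_lt this continuous_const

lemma bowenBall_subset_double {f : X → X} {x y : X} {n : ℕ} {ε : ℝ}
    (hy : y ∈ bowenBall f x n ε) : bowenBall f x n ε ⊆ bowenBall f y n (2 * ε) := by
  intro z hz i hi
  calc dist (f^[i] y) (f^[i] z)
      ≤ dist (f^[i] y) (f^[i] x) + dist (f^[i] x) (f^[i] z) := dist_triangle _ _ _
    _ < ε + ε := add_lt_add (by rw [dist_comm]; exact hy i hi) (hz i hi)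
    _ = 2 * ε := by ring

lemma birk_le_of_bowen {f : X → X} {φ : X → ℝ} {n : ℕ} {ε η : ℝ}
    (hmod : ∀ u v : X, dist u v < ε → |φ u - φ v| ≤ η) {x y : X}
    (hy : y ∈ bowenBall f x n ε) : birk f φ n y ≤ birk f φ n x + n * η := by
  have h : birk f φ n y - birk f φ n x ≤ n * η := by
    rw [birk, birk, ← Finset.sum_sub_distrib]
    calc ∑ i ∈ Finset.range n, (φ (f^[i] y) - φ (f^[i] x))
        ≤ ∑ _i ∈ Finset.range n, η := by
          refine Finset.sum_le_sum (fun i hi => ?_)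
          have := hmod (f^[i] y) (f^[i] x) (by rw [dist_comm]; exact hy i (Finset.mem_range.mp hi))
          exact (abs_le.mp this).2
      _ = n * η := by simp [mul_comm]
  linarith

end Aux

section Aux2
variable [MetricSpace X] [MeasurableSpace X]

/-- the `ε`-level liminf quantity. -/
noncomputable def Lfun (f : X → X) (φ : X → ℝ) (μ : Measure X) (ε : ℝ) (x : X) : EReal :=
  Filter.atTop.liminf (fun n : ℕ =>
    (((n : ℝ)⁻¹ : ℝ) : EReal) * (-(μ (bowenBall f x n ε)).log + ((birk f φ n x : ℝ) : EReal)))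

lemma ptPressure_eq_iSup_Lfun (f : X → X) (φ : X → ℝ) (μ : Measure X) (x : X) :
    ptPressure f φ μ x = ⨆ (ε : ℝ) (_ : 0 < ε), Lfun f φ μ ε x := rfl

/-- core term conversion, direction 1. -/
lemma term_conv₁ {m : ℝ≥0∞} {S c : ℝ} {n : ℕ} (hn : 1 ≤ n)
    (h : (c : EReal) < (((n : ℝ)⁻¹ : ℝ) : EReal) * (-m.log + (S : EReal))) :
    m ≤ ENNReal.ofReal (Real.exp (S - n * c)) := by
  rcases eq_or_ne m 0 with rfl | hm0
  · exact zero_le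
  rcases eq_or_ne m ⊤ with rfl | hmtop
  · exfalso
    rw [ENNReal.log_top] at h
    have heq : -(⊤ : EReal) + (S : EReal) = ⊥ := by
      rw [EReal.neg_top]; exact EReal.bot_add (S : EReal)
    rw [heq] at h
    have hpos : (0:ℝ) < (n : ℝ)⁻¹ := by positivity
    rw [EReal.coe_mul_bot_of_pos (by exact_mod_cast hpos)] at h
    exact (not_lt_bot h)
  · have hl : m.log = ((Real.log m.toReal : ℝ) : EReal) := ENNReal.log_pos_real hm0 hmtop
    set l := Real.log m.toReal with hldef
    rw [hl] at h
    have heq : (-(l : EReal) + (S : EReal)) = ((S - l : ℝ) : EReal) := by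
      rw [← EReal.coe_neg, ← EReal.coe_add]; ring_nf
    rw [heq, ← EReal.coe_mul, EReal.coe_lt_coe_iff] at h
    have hnpos : (0:ℝ) < (n:ℝ) := by exact_mod_cast hn
    have h2 : (n:ℝ) * c < S - l := by
      have := (mul_lt_mul_iff_right₀ hnpos).mpr h
      rw [← mul_assoc, mul_inv_cancel₀ hnpos.ne', one_mul] at this
      linarith
    have h3 : l < S - n * c := by linarith
    have h4 : m.toReal < Real.exp (S - n * c) := by
      calc m.toReal = Real.exp l := (Real.exp_log (ENNReal.toReal_pos hm0 hmtop)).symm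
        _ < Real.exp (S - n * c) := Real.exp_lt_exp.mpr h3
    exact le_of_lt (by
      rw [← ENNReal.ofReal_toReal hmtop]
      exact (ENNReal.ofReal_lt_ofReal_iff (Real.exp_pos _)).mpr h4)

/-- core term conversion, direction 2. -/
lemma term_conv₂ {m : ℝ≥0∞} {S c : ℝ} {n : ℕ} (hn : 1 ≤ n) (hmtop : m ≠ ⊤)
    (h : (((n : ℝ)⁻¹ : ℝ) : EReal) * (-m.log + (S : EReal)) < (c : EReal)) :
    ENNReal.ofReal (Real.exp (S - n * c)) ≤ m := by
  rcases eq_or_ne m 0 with rfl | hm0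
  · exfalso
    rw [ENNReal.log_zero] at h
    have heq : -(⊥ : EReal) + (S : EReal) = ⊤ := by
      rw [EReal.neg_bot]; exact EReal.top_add_coe S
    rw [heq] at h
    have hpos : (0:ℝ) < (n : ℝ)⁻¹ := by positivity
    rw [EReal.coe_mul_top_of_pos (by exact_mod_cast hpos)] at h
    exact (not_top_lt h)
  · have hl : m.log = ((Real.log m.toReal : ℝ) : EReal) := ENNReal.log_pos_real hm0 hmtop
    set l := Real.log m.toReal with hldef
    rw [hl] at h
    have heq : (-(l : EReal) + (S : EReal)) = ((S - l : ℝ) : EReal) := by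
      rw [← EReal.coe_neg, ← EReal.coe_add]; ring_nf
    rw [heq, ← EReal.coe_mul, EReal.coe_lt_coe_iff] at h
    have hnpos : (0:ℝ) < (n:ℝ) := by exact_mod_cast hn
    have h2 : S - l < (n:ℝ) * c := by
      have := (mul_lt_mul_iff_right₀ hnpos).mpr h
      rw [← mul_assoc, mul_inv_cancel₀ hnpos.ne', one_mul] at this
      linarith
    have h3 : S - n * c < l := by linarith
    have h4 : Real.exp (S - n * c) ≤ m.toReal := by
      calc Real.exp (S - n*c) ≤ Real.exp l := Real.exp_le_exp.mpr h3.le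
        _ = m.toReal := Real.exp_log (ENNReal.toReal_pos hm0 hmtop)
    rw [← ENNReal.ofReal_toReal hmtop]
    exact ENNReal.ofReal_le_ofReal h4

lemma Lfun_antitone {f : X → X} {φ : X → ℝ} {μ : Measure X} {ε ε' : ℝ} (h : ε ≤ ε') (x : X) :
    Lfun f φ μ ε' x ≤ Lfun f φ μ ε x := by
  refine Filter.liminf_le_liminf (Filter.Eventually.of_forall (fun n => ?_)) ?_ ?_
  · refine mul_le_mul_of_nonneg_left (add_le_add_left ?_ _) (by exact EReal.coe_nonneg.mpr (by positivity))
    rw [EReal.neg_le_neg_iff]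
    exact ENNReal.log_monotone (measure_mono (bowenBall_mono h))
  · isBoundedDefault
  · isBoundedDefault

lemma Lfun_le_ptPressure {f : X → X} {φ : X → ℝ} {μ : Measure X} {ε : ℝ} (hε : 0 < ε) (x : X) :
    Lfun f φ μ ε x ≤ ptPressure f φ μ x := by
  rw [ptPressure_eq_iSup_Lfun]
  exact le_iSup₂ (f := fun ε (_ : 0 < ε) => Lfun f φ μ ε x) ε hε

lemma ptPressure_eq_iSup_nat (f : X → X) (φ : X → ℝ) (μ : Measure X) (x : X) :
    ptPressure f φ μ x = ⨆ k : ℕ, Lfun f φ μ (1 / (k + 1)) x := by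
  rw [ptPressure_eq_iSup_Lfun]
  apply le_antisymm
  · refine iSup₂_le (fun ε hε => ?_)
    obtain ⟨k, hk⟩ := exists_nat_one_div_lt hε
    exact le_trans (Lfun_antitone hk.le x) (le_iSup (fun k : ℕ => Lfun f φ μ (1 / ((k:ℝ) + 1)) x) k)
  · refine iSup_le (fun k => ?_)
    have hk : (0:ℝ) < 1 / (k + 1) := by positivity
    exact le_iSup₂ (f := fun ε (_ : 0 < ε) => Lfun f φ μ ε x) (1 / ((k:ℝ) + 1)) hk

end Aux2

section Meas
variable [MetricSpace X] [CompactSpace X] [MeasurableSpace X] [BorelSpace X]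

lemma continuous_birk {f : X → X} (hf : Continuous f) {φ : X → ℝ} (hφ : Continuous φ) (n : ℕ) :
    Continuous fun x => birk f φ n x := by
  unfold birk
  exact continuous_finset_sum _ (fun i _ => hφ.comp (hf.iterate i))

lemma measurable_mu_bowenBall (f : X → X) (hf : Continuous f) (μ : Measure X) [SFinite μ]
    (n : ℕ) (ε : ℝ) : Measurable fun x => μ (bowenBall f x n ε) := by
  have hW : MeasurableSet {p : X × X | ∀ i < n, dist (f^[i] p.1) (f^[i] p.2) < ε} := by
    have hOpen : IsOpen {p : X × X | ∀ i < n, dist (f^[i] p.1) (f^[i] p.2) < ε} := by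
      have h : {p : X × X | ∀ i < n, dist (f^[i] p.1) (f^[i] p.2) < ε}
          = ⋂ i ∈ Finset.range n, {p : X × X | dist (f^[i] p.1) (f^[i] p.2) < ε} := by
        ext p; simp
      rw [h]
      refine isOpen_biInter_finset (fun i _ => ?_)
      exact isOpen_lt (((hf.iterate i).comp continuous_fst).dist ((hf.iterate i).comp continuous_snd)) continuous_const
    exact hOpen.measurableSet
  exact measurable_measure_prodMk_left (ν := μ) hW

lemma measurable_Lfun {f : X → X} (hf : Continuous f) {φ : X → ℝ} (hφ : Continuous φ)
    (μ : Measure X) [SFinite μ] (ε : ℝ) : Measurable (Lfun f φ μ ε) := by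
  apply Measurable.liminf
  intro n
  have h1 : Measurable fun x => -(μ (bowenBall f x n ε)).log :=
    (Measurable.ennreal_log (measurable_mu_bowenBall f hf μ n ε)).neg
  have h2 : Measurable fun x => birk f φ n x := (continuous_birk hf hφ n).measurable
  have hF : Continuous (fun p : EReal × ℝ => p.1 + (p.2 : EReal)) := by
    rw [continuous_iff_continuousAt]
    intro p
    have hc1 : ContinuousAt (fun q : EReal × EReal => q.1 + q.2) (p.1, (p.2 : EReal)) :=
      EReal.continuousAt_add (by right; exact EReal.coe_ne_bot _) (by right; exact EReal.coe_ne_top _)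
    have hc2 : ContinuousAt (fun p : EReal × ℝ => (p.1, (p.2 : EReal))) p :=
      (continuous_fst.prodMk (continuous_coe_real_ereal.comp continuous_snd)).continuousAt
    exact ContinuousAt.comp (g := fun q : EReal × EReal => q.1 + q.2)
      (f := fun p : EReal × ℝ => (p.1, (p.2 : EReal))) (x := p) hc1 hc2
  have h3 : Measurable fun x => (-(μ (bowenBall f x n ε)).log + ((birk f φ n x : ℝ) : EReal)) :=
    hF.measurable.comp (h1.prodMk h2)
  have hmono : Monotone fun z : EReal => (((n:ℝ)⁻¹ : ℝ) : EReal) * z :=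
    fun a b h => mul_le_mul_of_nonneg_left h (EReal.coe_nonneg.mpr (by positivity))
  exact hmono.measurable.comp h3

lemma measurable_ptPressure {f : X → X} (hf : Continuous f) {φ : X → ℝ} (hφ : Continuous φ)
    (μ : Measure X) [SFinite μ] : Measurable (ptPressure f φ μ) := by
  have h : ptPressure f φ μ = fun x => ⨆ k : ℕ, Lfun f φ μ (1 / (k + 1)) x := by
    funext x; exact ptPressure_eq_iSup_nat f φ μ x
  rw [h]
  exact Measurable.iSup (fun k => measurable_Lfun hf hφ μ _)

end Meas

section Sep
variable [MetricSpace X] [CompactSpace X]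

/-- maximal `(n,ε)`-separated subsets of a set `W` exist, and they cover `W` by `ε`-Bowen
balls while having pairwise disjoint `ε/2`-Bowen balls. -/
lemma exists_maximal_sep {f : X → X} (hf : Continuous f) {ε : ℝ} (hε : 0 < ε)
    (n : ℕ) (W : Set X) :
    ∃ E : Finset X, (↑E ⊆ W) ∧
      (∀ x ∈ E, ∀ y ∈ E, x ≠ y → ∃ j < n, ε ≤ dist (f^[j] x) (f^[j] y)) ∧
      (W ⊆ ⋃ x ∈ E, bowenBall f x n ε) := by
  classical
  -- a finite ε/2 Bowen net
  obtain ⟨F, hF⟩ : ∃ F : Finset X, univ ⊆ ⋃ y ∈ F, bowenBall f y n (ε/2) := by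
    refine isCompact_univ.elim_finite_subcover (fun y : X => bowenBall f y n (ε/2))
      (fun y => isOpen_bowenBall hf) (fun x _ => Set.mem_iUnion.mpr ⟨x, self_mem_bowenBall (by linarith)⟩)
  set P : Finset X → Prop := fun E => (↑E ⊆ W) ∧
      (∀ x ∈ E, ∀ y ∈ E, x ≠ y → ∃ j < n, ε ≤ dist (f^[j] x) (f^[j] y)) with hP
  -- any P-set has card at most F.card
  have hcard : ∀ E : Finset X, P E → E.card ≤ F.card := by
    intro E hE
    have hsel : ∀ x ∈ E, ∃ y ∈ F, x ∈ bowenBall f y n (ε/2) := by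
      intro x _
      have := hF (Set.mem_univ x)
      simpa using this
    choose g hg₁ hg₂ using hsel
    refine Finset.card_le_card_of_injOn (fun x => if h : x ∈ E then g x h else x)
      (fun x hx => by simp only [dif_pos (Finset.mem_coe.mp hx)]; exact hg₁ x _) ?_
    intro x hx y hy hxy
    simp only [Finset.mem_coe] at hx hy
    simp only [dif_pos hx, dif_pos hy] at hxy
    by_contra hne
    obtain ⟨j, hj, hsep⟩ := hE.2 x hx y hy hne
    have h1 := hg₂ x hx j hj
    have h2 := hg₂ y hy j hj
    rw [hxy] at h1
    have : dist (f^[j] x) (f^[j] y) < ε := by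
      calc dist (f^[j] x) (f^[j] y)
          ≤ dist (f^[j] x) (f^[j] (g y hy)) + dist (f^[j] (g y hy)) (f^[j] y) := dist_triangle _ _ _
        _ < ε/2 + ε/2 := add_lt_add (by rw [dist_comm]; exact h1) h2
        _ = ε := by ring
    linarith
  -- pick a P-set of maximal cardinality
  set K : Set ℕ := {k | ∃ E : Finset X, P E ∧ E.card = k} with hK
  have hKne : K.Nonempty := ⟨0, ∅, ⟨by simp, by simp⟩, rfl⟩
  have hKbdd : BddAbove K := ⟨F.card, fun k ⟨E, hE, hEk⟩ => hEk ▸ hcard E hE⟩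
  obtain ⟨E, hPE, hEcard⟩ : ∃ E : Finset X, P E ∧ E.card = sSup K := Nat.sSup_mem hKne hKbdd
  refine ⟨E, hPE.1, hPE.2, ?_⟩
  -- maximality gives the covering property
  intro z hz
  by_contra hzn
  simp only [Set.mem_iUnion, not_exists] at hzn
  have hzE : z ∉ E := fun h => hzn z h (self_mem_bowenBall hε)
  have hPE' : P (insert z E) := by
    constructor
    · intro u hu
      rcases Finset.mem_insert.mp (by simpa using hu) with rfl | hu'
      · exact hz
      · exact hPE.1 hu'
    · intro x hx y hy hne
      rcases Finset.mem_insert.mp hx with rfl | hx' <;> rcases Finset.mem_insert.mp hy with rfl | hy'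
      · exact absurd rfl hne
      · -- x = z, y ∈ E
        have : y ∉ bowenBall f y n ε → False := fun h => h (self_mem_bowenBall hε)
        have hzy := hzn y hy'
        rw [bowenBall, Set.mem_setOf_eq] at hzy
        push_neg at hzy
        obtain ⟨j, hj, hd⟩ := hzy
        exact ⟨j, hj, by rw [dist_comm] at hd ⊢; rw [dist_comm]; exact hd⟩
      · have hzx := hzn x hx'
        rw [bowenBall, Set.mem_setOf_eq] at hzx
        push_neg at hzx
        obtain ⟨j, hj, hd⟩ := hzx
        exact ⟨j, hj, hd⟩
      · exact hPE.2 x hx' y hy' hne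
  have : (insert z E).card ≤ sSup K := le_csSup hKbdd ⟨insert z E, hPE', rfl⟩
  rw [Finset.card_insert_of_notMem hzE, hEcard] at this
  omega

end Sep

section McovZero
variable [MetricSpace X] [CompactSpace X] [MeasurableSpace X] [BorelSpace X]

lemma Mcov_le_iInf {f : X → X} {φ : X → ℝ} {Z : Set X} {α : ℝ} {N : ℕ} {ε : ℝ}
    (c : ℕ → X × ℕ) (hc : (∀ i, N ≤ (c i).2) ∧ Z ⊆ ⋃ i, bowenBall f (c i).1 (c i).2 ε) :
    Mcov f φ Z α N ε ≤
      ∑' i, ENNReal.ofReal (Real.exp (-α * ((c i).2 : ℝ) + birk f φ (c i).2 (c i).1)) :=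
  iInf₂_le c hc

/-- Key covering estimate: if every point of `Z` has infinitely many "large" Bowen balls
at scale `ε/2` and level `a`, then `Mcov` vanishes at level `a + δ` and scale `ε`. -/
lemma Mcov_eq_zero {f : X → X} (hf : Continuous f) {φ : X → ℝ}
    {μ : Measure X} [IsProbabilityMeasure μ]
    {Z : Set X} (hZne : Z.Nonempty) {ε a δ : ℝ} (hε : 0 < ε) (hδ : 0 < δ)
    (hZ : ∀ x ∈ Z, ∀ M : ℕ, ∃ n, M ≤ n ∧
      ENNReal.ofReal (Real.exp (birk f φ n x - n * a)) ≤ μ (bowenBall f x n (ε/2)))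
    (N : ℕ) : Mcov f φ Z (a + δ) N ε = 0 := by
  classical
  -- the main estimate, for arbitrary M ≥ N:
  have main : ∀ M : ℕ, N ≤ M → Mcov f φ Z (a + δ) N ε ≤
      ENNReal.ofReal (Real.exp (-δ * M / 2)) * (1 - ENNReal.ofReal (Real.exp (-δ/2)))⁻¹ := by
    intro M hM
    set Zn : ℕ → Set X := fun n => {x | x ∈ Z ∧ M ≤ n ∧
      ENNReal.ofReal (Real.exp (birk f φ n x - n * a)) ≤ μ (bowenBall f x n (ε/2))} with hZn
    -- choose maximal separated subsets of each `Zn n`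
    have hsep := fun n => exists_maximal_sep (X := X) hf hε n (Zn n)
    choose E hE₁ hE₂ hE₃ using hsep
    -- `Zn` covers `Z`
    have hcov : Z ⊆ ⋃ n, ⋃ x ∈ E n, bowenBall f x n ε := by
      intro z hz
      obtain ⟨n, hn, hmu⟩ := hZ z hz M
      have hzZn : z ∈ Zn n := ⟨hz, hn, hmu⟩
      exact Set.mem_iUnion.mpr ⟨n, hE₃ n hzZn⟩
    -- `ε/2`-Bowen balls with centers in `E n` are pairwise disjoint
    have hdisj : ∀ n, (↑(E n) : Set X).PairwiseDisjoint (fun x => bowenBall f x n (ε/2)) := by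
      intro n x hx y hy hne
      rw [Function.onFun, Set.disjoint_left]
      intro z hzx hzy
      obtain ⟨j, hj, hd⟩ := hE₂ n x (by simpa using hx) y (by simpa using hy) hne
      have : dist (f^[j] x) (f^[j] y) < ε := by
        calc dist (f^[j] x) (f^[j] y)
            ≤ dist (f^[j] x) (f^[j] z) + dist (f^[j] z) (f^[j] y) := dist_triangle _ _ _
          _ < ε/2 + ε/2 := add_lt_add (hzx j hj) (by rw [dist_comm]; exact hzy j hj)
          _ = ε := by ring
      linarith
    -- weight estimate for each `n`
    have hwt : ∀ n, (∑ x ∈ E n, ENNReal.ofReal (Real.exp (-(a + δ) * n + birk f φ n x)))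
        ≤ ENNReal.ofReal (Real.exp (-δ * M / 2)) * ENNReal.ofReal (Real.exp (-δ/2)) ^ n := by
      intro n
      rcases Finset.eq_empty_or_nonempty (E n) with hEn | hEn
      · simp [hEn]
      · -- then `Zn n` is nonempty, hence `M ≤ n`
        obtain ⟨x₀, hx₀⟩ := hEn
        have hMn : M ≤ n := (hE₁ n hx₀).2.1
        have hstep : ∀ x ∈ E n, ENNReal.ofReal (Real.exp (-(a + δ) * n + birk f φ n x))
            ≤ ENNReal.ofReal (Real.exp (-δ * n)) * μ (bowenBall f x n (ε/2)) := by
          intro x hx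
          have hxZn : x ∈ Zn n := hE₁ n hx
          have heq : Real.exp (-(a + δ) * n + birk f φ n x)
              = Real.exp (-δ * n) * Real.exp (birk f φ n x - n * a) := by
            rw [← Real.exp_add]; ring_nf
          rw [heq, ENNReal.ofReal_mul (Real.exp_nonneg _)]
          exact mul_le_mul_right hxZn.2.2 _
        calc (∑ x ∈ E n, ENNReal.ofReal (Real.exp (-(a + δ) * n + birk f φ n x)))
            ≤ ∑ x ∈ E n, ENNReal.ofReal (Real.exp (-δ * n)) * μ (bowenBall f x n (ε/2)) :=
              Finset.sum_le_sum hstep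
          _ = ENNReal.ofReal (Real.exp (-δ * n)) * ∑ x ∈ E n, μ (bowenBall f x n (ε/2)) := by
              rw [Finset.mul_sum]
          _ = ENNReal.ofReal (Real.exp (-δ * n)) * μ (⋃ x ∈ E n, bowenBall f x n (ε/2)) := by
              rw [measure_biUnion_finset (hdisj n) (fun x _ => (isOpen_bowenBall hf).measurableSet)]
          _ ≤ ENNReal.ofReal (Real.exp (-δ * n)) * 1 := by
              exact mul_le_mul_right (le_trans (measure_mono (Set.subset_univ _)) (le_of_eq measure_univ)) _
          _ = ENNReal.ofReal (Real.exp (-δ * n)) := mul_one _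
          _ ≤ ENNReal.ofReal (Real.exp (-δ * M / 2)) * ENNReal.ofReal (Real.exp (-δ/2)) ^ n := by
              rw [← ENNReal.ofReal_pow (Real.exp_nonneg _), ← Real.exp_nat_mul,
                ← ENNReal.ofReal_mul (Real.exp_nonneg _), ← Real.exp_add]
              apply ENNReal.ofReal_le_ofReal
              apply Real.exp_le_exp.mpr
              have h1 : -δ * M / 2 + n * (-δ/2) ≥ -δ * n := by
                have : (M : ℝ) ≤ n := by exact_mod_cast hMn
                nlinarith
              linarith
    -- enumerate the countable family of balls
    set T := (n : ℕ) × {x : X // x ∈ E n} with hT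
    have hTinf : Infinite T := by
      -- infinitely many `E n` are nonempty
      obtain ⟨z, hz⟩ := hZne
      set S : Set ℕ := {n | (E n).Nonempty} with hS
      have hSinf : S.Infinite := by
        apply Set.infinite_of_not_bddAbove
        rintro ⟨b, hb⟩
        obtain ⟨n, hn, hmu⟩ := hZ z hz (max M (b + 1))
        have hzZn : z ∈ Zn n := ⟨hz, le_trans (le_max_left _ _) hn, hmu⟩
        have := hE₃ n hzZn
        simp only [Set.mem_iUnion] at this
        obtain ⟨x, hx, -⟩ := this
        have hnS : n ∈ S := ⟨x, hx⟩
        have := hb hnS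
        omega
      haveI := hSinf.to_subtype
      exact Infinite.of_injective (fun s : S => (⟨s.1, (s.2.choose), s.2.choose_spec⟩ : T))
        (by rintro ⟨s, hs⟩ ⟨t, ht⟩ h; simpa using congrArg Sigma.fst h)
    haveI : Encodable T := Encodable.ofCountable T
    haveI : Denumerable T := Denumerable.ofEncodableOfInfinite T
    set e : T ≃ ℕ := Denumerable.eqv T with he
    set c : ℕ → X × ℕ := fun i => ((e.symm i).2.1, (e.symm i).1) with hc
    have hprop : (∀ i, N ≤ (c i).2) ∧ Z ⊆ ⋃ i, bowenBall f (c i).1 (c i).2 ε := by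
      constructor
      · intro i
        have hx : ((e.symm i).2 : X) ∈ E (e.symm i).1 := (e.symm i).2.2
        have := (hE₁ (e.symm i).1 hx).2.1
        simp only [hc]
        omega
      · intro z hz
        have := hcov hz
        simp only [Set.mem_iUnion] at this
        obtain ⟨n, x, hx, hball⟩ := this
        refine Set.mem_iUnion.mpr ⟨e ⟨n, ⟨x, hx⟩⟩, ?_⟩
        simp only [hc]
        rw [Equiv.symm_apply_apply]
        exact hball
    refine le_trans (Mcov_le_iInf c hprop) ?_
    -- compute/estimate the total weight
    have hsum : ∑' i, ENNReal.ofReal (Real.exp (-(a + δ) * ((c i).2 : ℝ) + birk f φ (c i).2 (c i).1))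
        = ∑' t : T, ENNReal.ofReal (Real.exp (-(a + δ) * (t.1 : ℝ) + birk f φ t.1 t.2.1)) := by
      rw [← Equiv.tsum_eq e.symm (fun t : T =>
        ENNReal.ofReal (Real.exp (-(a + δ) * (t.1 : ℝ) + birk f φ t.1 t.2.1)))]
    rw [hsum, ENNReal.tsum_sigma']
    have hfin : ∀ n, ∑' x : {x : X // x ∈ E n},
        ENNReal.ofReal (Real.exp (-(a + δ) * (n : ℝ) + birk f φ n x.1))
        = ∑ x ∈ E n, ENNReal.ofReal (Real.exp (-(a + δ) * (n : ℝ) + birk f φ n x)) := by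
      intro n
      rw [tsum_fintype]
      exact Finset.sum_attach (E n) (fun x => ENNReal.ofReal (Real.exp (-(a + δ) * (n : ℝ) + birk f φ n x)))
    calc ∑' n : ℕ, ∑' x : {x : X // x ∈ E n},
          ENNReal.ofReal (Real.exp (-(a + δ) * (n : ℝ) + birk f φ n x.1))
        = ∑' n : ℕ, ∑ x ∈ E n, ENNReal.ofReal (Real.exp (-(a + δ) * (n : ℝ) + birk f φ n x)) := by
          exact tsum_congr hfin
      _ ≤ ∑' n : ℕ, ENNReal.ofReal (Real.exp (-δ * M / 2)) * ENNReal.ofReal (Real.exp (-δ/2)) ^ n :=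
          ENNReal.tsum_le_tsum hwt
      _ = ENNReal.ofReal (Real.exp (-δ * M / 2)) * ∑' n : ℕ, ENNReal.ofReal (Real.exp (-δ/2)) ^ n :=
          ENNReal.tsum_mul_left
      _ = ENNReal.ofReal (Real.exp (-δ * M / 2)) * (1 - ENNReal.ofReal (Real.exp (-δ/2)))⁻¹ := by
          rw [ENNReal.tsum_geometric]
  -- now let `M → ∞`
  have hq : (1 - ENNReal.ofReal (Real.exp (-δ/2)))⁻¹ ≠ ⊤ := by
    rw [Ne, ENNReal.inv_eq_top, tsub_eq_zero_iff_le]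
    intro h
    have h1 : (1:ℝ≥0∞) ≠ ⊤ := ENNReal.one_ne_top
    have := ENNReal.toReal_mono (by finiteness) h
    rw [ENNReal.toReal_one, ENNReal.toReal_ofReal (Real.exp_nonneg _)] at this
    have : Real.exp (-δ/2) < 1 := Real.exp_lt_one_iff.mpr (by linarith)
    linarith
  have htend : Filter.Tendsto (fun M : ℕ =>
      ENNReal.ofReal (Real.exp (-δ * M / 2)) * (1 - ENNReal.ofReal (Real.exp (-δ/2)))⁻¹)
      Filter.atTop (nhds 0) := by
    have h0 : Filter.Tendsto (fun M : ℕ => ENNReal.ofReal (Real.exp (-δ * M / 2)))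
        Filter.atTop (nhds 0) := by
      rw [← ENNReal.ofReal_zero]
      apply ENNReal.tendsto_ofReal
      apply Real.tendsto_exp_atBot.comp
      apply Filter.Tendsto.atBot_div_const (by norm_num)
      exact Filter.Tendsto.const_mul_atTop_of_neg (neg_neg_iff_pos.mpr hδ) tendsto_natCast_atTop_atTop
    have := ENNReal.Tendsto.mul_const h0 (Or.inr hq)
    simpa using this
  have hle : Mcov f φ Z (a + δ) N ε ≤ 0 := by
    apply ge_of_tendsto htend
    filter_upwards [Filter.eventually_ge_atTop N] with M hM
    exact main M hM
  exact le_antisymm hle (zero_le)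

end McovZero

section Dir2
variable [MetricSpace X] [CompactSpace X] [MeasurableSpace X] [BorelSpace X]

lemma EReal.le_of_forall_real_lt_le {b s : EReal} (h : ∀ a : ℝ, s < (a : EReal) → b ≤ (a : EReal)) :
    b ≤ s := by
  by_contra hc
  push_neg at hc
  obtain ⟨y, hsy, hyb⟩ := EReal.exists_between_coe_real hc
  exact absurd (h y hsy) (not_le.mpr hyb)

lemma dir2 {f : X → X} (hf : Continuous f) {φ : X → ℝ} (hφ : Continuous φ)
    {μ : Measure X} [IsProbabilityMeasure μ] {ε : ℝ} (hε : 0 < ε) :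
    (⨅ (Z : Set X) (_ : MeasurableSet Z ∧ μ Z = 1), PZeps f φ Z ε)
      ≤ essSup (fun x => ptPressure f φ μ x) μ := by
  apply EReal.le_of_forall_real_lt_le
  intro a ha
  have hae : ∀ᵐ x ∂μ, ptPressure f φ μ x < (a : EReal) := ae_lt_of_essSup_lt ha
  set Z : Set X := {x | ptPressure f φ μ x < (a : EReal)} with hZdef
  have hZm : MeasurableSet Z :=
    measurableSet_lt (measurable_ptPressure hf hφ μ) measurable_const
  have hZ1 : μ Z = 1 := by
    have hcompl : μ Zᶜ = 0 := by
      have h := MeasureTheory.ae_iff.mp hae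
      have hcc : Zᶜ = {x | ¬ ptPressure f φ μ x < (a : EReal)} := by
        rw [hZdef, Set.compl_setOf]
      rw [hcc]; exact h
    have := MeasureTheory.measure_add_measure_compl (μ := μ) hZm
    rw [hcompl, add_zero] at this
    rw [this]; exact measure_univ
  have hZne : Z.Nonempty := MeasureTheory.nonempty_of_measure_ne_zero (by rw [hZ1]; exact one_ne_zero)
  -- every point of Z admits infinitely many large Bowen balls at scale ε/2
  have hZpt : ∀ x ∈ Z, ∀ M : ℕ, ∃ n, M ≤ n ∧
      ENNReal.ofReal (Real.exp (birk f φ n x - n * a)) ≤ μ (bowenBall f x n (ε/2)) := by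
    intro x hx M
    have hL : Lfun f φ μ (ε/2) x < (a : EReal) :=
      lt_of_le_of_lt (Lfun_le_ptPressure (by linarith) x) hx
    have hfreq := Filter.frequently_lt_of_liminf_lt (by isBoundedDefault) hL
    rw [Filter.frequently_atTop] at hfreq
    obtain ⟨n, hn, hterm⟩ := hfreq (max M 1)
    refine ⟨n, le_trans (le_max_left _ _) hn, ?_⟩
    exact term_conv₂ (le_trans (le_max_right _ _) hn) (measure_ne_top μ _) hterm
  -- conclude
  refine le_trans (iInf₂_le Z ⟨hZm, hZ1⟩) ?_
  apply EReal.le_of_forall_real_lt_le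
  intro c hc
  have hac : a < c := by exact_mod_cast hc
  have hmz : mZ f φ Z c ε = 0 := by
    rw [mZ, ENNReal.iSup_eq_zero]
    intro N
    have := Mcov_eq_zero hf hZne hε (sub_pos.mpr hac) hZpt N (μ := μ)
    rwa [add_sub_cancel] at this
  exact iInf₂_le c hmz

end Dir2

section Dir1
variable [MetricSpace X] [CompactSpace X] [MeasurableSpace X] [BorelSpace X]

lemma ennreal_eq_zero_of_forall_le {m : ℝ≥0∞} (h : ∀ γ : ℝ, 0 < γ → m ≤ ENNReal.ofReal γ) :
    m = 0 := by
  refine le_antisymm (ENNReal.le_of_forall_pos_le_add (fun θ hθ _ => ?_)) (zero_le)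
  rw [zero_add]
  have := h θ (by exact_mod_cast hθ)
  rwa [ENNReal.ofReal_coe_nnreal] at this

lemma exists_cover_of_Mcov_eq_zero {f : X → X} {φ : X → ℝ} {Z : Set X} {α : ℝ} {N : ℕ} {ε : ℝ}
    (h : Mcov f φ Z α N ε = 0) {γ : ℝ} (hγ : 0 < γ) :
    ∃ c : ℕ → X × ℕ, (∀ i, N ≤ (c i).2) ∧ (Z ⊆ ⋃ i, bowenBall f (c i).1 (c i).2 ε) ∧
      ∑' i, ENNReal.ofReal (Real.exp (-α * ((c i).2 : ℝ) + birk f φ (c i).2 (c i).1))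
        < ENNReal.ofReal γ := by
  have hlt : Mcov f φ Z α N ε < ENNReal.ofReal γ := by
    rw [h]; exact ENNReal.ofReal_pos.mpr hγ
  rw [Mcov, iInf_lt_iff] at hlt
  obtain ⟨c, hc⟩ := hlt
  rw [iInf_lt_iff] at hc
  obtain ⟨hcond, hsum⟩ := hc
  exact ⟨c, hcond.1, hcond.2, hsum⟩

/-- Direction 1 core: from a vanishing `mZ` on a full-measure set, an a.e. upper bound
on the pointwise quantity at doubled radius. -/
lemma dir1_ae {f : X → X} (hf : Continuous f) {φ : X → ℝ}
    {μ : Measure X} [IsProbabilityMeasure μ]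
    {Z : Set X} (hZm : MeasurableSet Z) (hZ1 : μ Z = 1) {ε η α : ℝ} (hε : 0 < ε)
    (hmod : ∀ u v : X, dist u v < ε → |φ u - φ v| ≤ η)
    (hmz : mZ f φ Z α ε = 0) :
    ∀ᵐ x ∂μ, Lfun f φ μ (2 * ε) x ≤ ((α + η : ℝ) : EReal) := by
  set A : ℕ → Set X := fun N => {x | ∀ n, N ≤ n → 1 ≤ n →
    μ (bowenBall f x n (2 * ε)) ≤ ENNReal.ofReal (Real.exp (birk f φ n x - n * (α + η)))}
    with hA
  have hMcov : ∀ N : ℕ, Mcov f φ Z α N ε = 0 := by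
    intro N
    have := hmz
    rw [mZ, ENNReal.iSup_eq_zero] at this
    exact this N
  -- each `A N ∩ Z` is null
  have hAnull : ∀ N : ℕ, μ (A N ∩ Z) = 0 := by
    intro N
    apply ennreal_eq_zero_of_forall_le
    intro γ hγ
    obtain ⟨c, hcN, hccov, hcsum⟩ := exists_cover_of_Mcov_eq_zero (h := hMcov (max N 1)) hγ
    have hsub : A N ∩ Z ⊆ ⋃ i, (bowenBall f (c i).1 (c i).2 ε ∩ A N) := by
      rintro x ⟨hxA, hxZ⟩
      obtain ⟨i, hi⟩ := Set.mem_iUnion.mp (hccov hxZ)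
      exact Set.mem_iUnion.mpr ⟨i, hi, hxA⟩
    refine le_trans (measure_mono hsub) (le_trans (measure_iUnion_le _) (le_trans ?_ hcsum.le))
    refine ENNReal.tsum_le_tsum (fun i => ?_)
    rcases Set.eq_empty_or_nonempty (bowenBall f (c i).1 (c i).2 ε ∩ A N) with hemp | ⟨y, hyb, hyA⟩
    · rw [hemp]; simp
    · set n := (c i).2 with hn
      have hn1 : 1 ≤ n := le_trans (le_max_right _ _) (hcN i)
      have hnN : N ≤ n := le_trans (le_max_left _ _) (hcN i)
      calc μ (bowenBall f (c i).1 n ε ∩ A N)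
          ≤ μ (bowenBall f y n (2 * ε)) :=
            measure_mono (le_trans Set.inter_subset_left (bowenBall_subset_double hyb))
        _ ≤ ENNReal.ofReal (Real.exp (birk f φ n y - n * (α + η))) := hyA n hnN hn1
        _ ≤ ENNReal.ofReal (Real.exp (-α * (n : ℝ) + birk f φ n (c i).1)) := by
            apply ENNReal.ofReal_le_ofReal
            apply Real.exp_le_exp.mpr
            have := birk_le_of_bowen hmod hyb
            push_cast
            linarith
  -- conclude
  rw [MeasureTheory.ae_iff]
  have hBsub : {x | ¬ Lfun f φ μ (2 * ε) x ≤ ((α + η : ℝ) : EReal)}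
      ⊆ (⋃ N, (A N ∩ Z)) ∪ Zᶜ := by
    intro x hx
    rw [Set.mem_setOf_eq, not_le] at hx
    by_cases hxZ : x ∈ Z
    · left
      have hev := Filter.eventually_lt_of_lt_liminf hx
      rw [Filter.eventually_atTop] at hev
      obtain ⟨N, hN⟩ := hev
      refine Set.mem_iUnion.mpr ⟨N, ?_, hxZ⟩
      intro n hn hn1
      exact term_conv₁ hn1 (hN n hn)
    · right; exact hxZ
  have hZc : μ Zᶜ = 0 := (MeasureTheory.prob_compl_eq_zero_iff hZm).mpr hZ1
  refine le_antisymm (le_trans (measure_mono hBsub) ?_) (zero_le)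
  refine le_trans (measure_union_le _ _) ?_
  rw [hZc, add_zero]
  refine le_trans (measure_iUnion_le _) ?_
  simp [hAnull]

end Dir1

section Dir1Assemble
variable [MetricSpace X] [CompactSpace X] [MeasurableSpace X] [BorelSpace X]

lemma EReal.le_coe_of_forall_rat {x : EReal} {c : ℝ}
    (h : ∀ q : ℚ, 0 < q → x ≤ ((c + 2 * (q:ℝ) : ℝ) : EReal)) : x ≤ (c : EReal) := by
  by_contra hc
  push_neg at hc
  obtain ⟨y, hcy, hyx⟩ := EReal.exists_between_coe_real hc
  have hy : 0 < (y - c) / 2 := by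
    have : c < y := by exact_mod_cast hcy
    linarith
  obtain ⟨q, hq0, hq2⟩ := exists_rat_btwn hy
  have hq0' : (0:ℚ) < q := by exact_mod_cast hq0
  have := h q hq0'
  have hysmall : c + 2 * (q:ℝ) < y := by
    have : (q : ℝ) < (y - c)/2 := hq2
    linarith
  have : x < x := lt_of_le_of_lt (lt_of_le_of_lt this (by exact_mod_cast hysmall)).le hyx
  exact lt_irrefl _ this

lemma EReal.eq_bot_of_forall_le_rat {x : EReal}
    (h : ∀ s : ℚ, x ≤ ((s:ℝ) : EReal)) : x = ⊥ := by
  by_contra hx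
  obtain ⟨y, hby, hyx⟩ := EReal.exists_between_coe_real (Ne.bot_lt hx)
  obtain ⟨s, hs⟩ := exists_rat_lt y
  have := h s
  have : x < x := lt_of_le_of_lt (this.trans (by exact_mod_cast hs.le)) hyx
  exact lt_irrefl _ this

lemma dir1 {f : X → X} (hf : Continuous f) {φ : X → ℝ} (hφ : Continuous φ)
    {μ : Measure X} [IsProbabilityMeasure μ] :
    essSup (fun x => ptPressure f φ μ x) μ ≤ Pmu f φ μ := by
  have hu : UniformContinuous φ := CompactSpace.uniformContinuous_of_continuous hφ
  have hPmu_ge : ∀ (ε : ℝ), 0 < ε →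
      (⨅ (Z : Set X) (_ : MeasurableSet Z ∧ μ Z = 1), PZeps f φ Z ε) ≤ Pmu f φ μ := by
    intro ε hε
    exact le_iSup₂ (f := fun (ε : ℝ) (_ : 0 < ε) =>
      ⨅ (Z : Set X) (_ : MeasurableSet Z ∧ μ Z = 1), PZeps f φ Z ε) ε hε
  -- the per-(j,q) claim
  have claim : ∀ (j : ℕ) (q : ℚ), 0 < q → ∀ᵐ x ∂μ,
      Lfun f φ μ (1/((j:ℝ)+1)) x ≤ Pmu f φ μ + ((2 * (q:ℝ) : ℝ) : EReal) := by
    intro j q hq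
    have hqR : (0:ℝ) < (q:ℝ) := by exact_mod_cast hq
    obtain ⟨θ, hθ, hmod0⟩ := Metric.uniformContinuous_iff.mp hu (q:ℝ) hqR
    set ε : ℝ := min θ (1/(2*((j:ℝ)+1))) with hεdef
    have hε : 0 < ε := lt_min hθ (by positivity)
    have h2ε : 2 * ε ≤ 1/((j:ℝ)+1) := by
      have : ε ≤ 1/(2*((j:ℝ)+1)) := min_le_right _ _
      have hj : (0:ℝ) < (j:ℝ)+1 := by positivity
      calc 2 * ε ≤ 2 * (1/(2*((j:ℝ)+1))) := by linarith
        _ = 1/((j:ℝ)+1) := by field_simp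
    have hmod : ∀ u v : X, dist u v < ε → |φ u - φ v| ≤ (q:ℝ) := by
      intro u v huv
      have := hmod0 (lt_of_lt_of_le huv (min_le_left _ _))
      rw [Real.dist_eq] at this
      exact this.le
    set p : EReal := ⨅ (Z : Set X) (_ : MeasurableSet Z ∧ μ Z = 1), PZeps f φ Z ε with hpdef
    have hpP : p ≤ Pmu f φ μ := hPmu_ge ε hε
    have hstep : ∀ α' : ℝ, p < (α' : EReal) → ∀ᵐ x ∂μ,
        Lfun f φ μ (1/((j:ℝ)+1)) x ≤ ((α' + (q:ℝ) : ℝ) : EReal) := by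
      intro α' hpα
      rw [hpdef, iInf_lt_iff] at hpα
      obtain ⟨Z, hZlt⟩ := hpα
      rw [iInf_lt_iff] at hZlt
      obtain ⟨⟨hZm, hZ1⟩, hPZ⟩ := hZlt
      rw [PZeps, iInf_lt_iff] at hPZ
      obtain ⟨β, hβ⟩ := hPZ
      rw [iInf_lt_iff] at hβ
      obtain ⟨hmzβ, hβα⟩ := hβ
      have hβα' : β < α' := by exact_mod_cast hβα
      have hae := dir1_ae hf hZm hZ1 hε hmod hmzβ
      filter_upwards [hae] with x hx
      have h2e : Lfun f φ μ (1/((j:ℝ)+1)) x ≤ Lfun f φ μ (2*ε) x := Lfun_antitone h2ε x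
      refine le_trans (le_trans h2e hx) ?_
      exact_mod_cast (by linarith : β + (q:ℝ) ≤ α' + (q:ℝ))
    by_cases hptop : p = ⊤
    · have hP : Pmu f φ μ = ⊤ := top_le_iff.mp (hptop ▸ hpP)
      filter_upwards with x
      rw [hP, EReal.top_add_coe]
      exact le_top
    by_cases hpbot : p = ⊥
    · have hall : ∀ r : ℚ, ∀ᵐ x ∂μ, Lfun f φ μ (1/((j:ℝ)+1)) x ≤ (((r:ℝ) + (q:ℝ) : ℝ) : EReal) := by
        intro r
        exact hstep (r:ℝ) (by rw [hpbot]; exact bot_lt_iff_ne_bot.mpr (EReal.coe_ne_bot _))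
      rw [← MeasureTheory.ae_all_iff] at hall
      filter_upwards [hall] with x hx
      have hbot : Lfun f φ μ (1/((j:ℝ)+1)) x = ⊥ := by
        apply EReal.eq_bot_of_forall_le_rat
        intro s
        have h2 := hx (s - q)
        have heq : ((((s - q):ℚ):ℝ) + (q:ℝ) : ℝ) = ((s:ℚ):ℝ) := by push_cast; ring
        rwa [heq] at h2
      rw [hbot]
      exact bot_le
    · obtain ⟨pr, hpr⟩ : ∃ pr : ℝ, p = (pr : EReal) := ⟨p.toReal, (EReal.coe_toReal hptop hpbot).symm⟩
      have := hstep (pr + q) (by rw [hpr]; exact_mod_cast (by linarith : pr < pr + (q:ℝ)))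
      filter_upwards [this] with x hx
      refine le_trans hx ?_
      have heq : ((pr + (q:ℝ) + (q:ℝ) : ℝ) : EReal) = ((pr:ℝ) : EReal) + ((2 * (q:ℝ) : ℝ) : EReal) := by
        rw [← EReal.coe_add]; norm_cast; push_cast; ring
      rw [heq]
      exact add_le_add_left (hpr ▸ hpP) _
  -- combine over j and q
  apply essSup_le_of_ae_le (hfbdd := by isBoundedDefault)
  have hall : ∀ᵐ x ∂μ, ∀ (j : ℕ) (q : {q : ℚ // 0 < q}),
      Lfun f φ μ (1/((j:ℝ)+1)) x ≤ Pmu f φ μ + ((2 * ((q:ℚ):ℝ) : ℝ) : EReal) := by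
    rw [MeasureTheory.ae_all_iff]
    intro j
    rw [MeasureTheory.ae_all_iff]
    rintro ⟨q, hq⟩
    exact claim j q hq
  filter_upwards [hall] with x hx
  show ptPressure f φ μ x ≤ Pmu f φ μ
  rw [ptPressure_eq_iSup_nat]
  refine iSup_le (fun j => ?_)
  have hxj : ∀ q : ℚ, 0 < q →
      Lfun f φ μ (1/((j:ℝ)+1)) x ≤ Pmu f φ μ + ((2 * (q:ℝ) : ℝ) : EReal) :=
    fun q hq => hx j ⟨q, hq⟩
  rcases eq_top_or_lt_top (Pmu f φ μ) with hP | hPlt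
  · rw [hP]; exact le_top
  by_cases hPbot : Pmu f φ μ = ⊥
  · have := hxj 1 one_pos
    rw [hPbot, EReal.bot_add] at this
    exact le_trans this bot_le
  · obtain ⟨pm, hpm⟩ : ∃ pm : ℝ, Pmu f φ μ = (pm : EReal) :=
      ⟨(Pmu f φ μ).toReal, (EReal.coe_toReal hPlt.ne hPbot).symm⟩
    rw [hpm]
    apply EReal.le_coe_of_forall_rat
    intro q hq
    have := hxj q hq
    rw [hpm] at this
    rwa [← EReal.coe_add] at this
end Dir1Assemble

end Paper

open Paper

/-- Proposition 4.2: the measure theoretic pressure is the essential supremum of the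
point-wise measure theoretic pressure. -/
theorem pressure_eq_essSup_ptPressure {X : Type*} [MetricSpace X] [CompactSpace X] [MeasurableSpace X] [BorelSpace X]
    (f : X → X) (hf : Continuous f) (φ : X → ℝ) (hφ : Continuous φ)
    (μ : Measure X) (hp : IsProbabilityMeasure μ) (hinv : MeasurePreserving f μ μ) :
    Pmu f φ μ = essSup (fun x => ptPressure f φ μ x) μ := by
  haveI := hp
  apply le_antisymm
  · rw [Pmu]
    exact iSup₂_le (fun ε hε => dir2 hf hφ hε)
  · exact dir1 hf hφ
end
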